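/- (Quantitative order of accuracy of MLS, Corollary of polynomial reproduction.) Let d ≥ 0, x₀ ∈ ℝⁿ, r > 0, and let x₁,…,x_N lie in the closed ball B̄(x₀, r). Let a₁,…,a_N ∈ ℝ satisfy Σ_i a_i π(x_i) = π(x₀) for every π ∈ Π_d(ℝⁿ), and assume Σ_i |a_i| ≤ Λ. Let f : ℝⁿ → ℝ be of class C^{d+1} on an open convex set U containing B̄(x₀, r), with ‖D^{d+1}f(y)‖ ≤ M (operator norm of the (d+1)-st iterated Fréchet derivative) for all y ∈ U. Then |f(x₀) − Σ_{i=1}^N a_i f(x_i)| ≤ (1 + Λ) · M · r^{d+1} / (d+1)!. -/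

import Mathlib

open Set Finset Nat

/-- Quantitative order of accuracy of MLS: if the nodes lie in
`B̄(x₀, r)`, the coefficients reproduce `Π_d(ℝⁿ)` at `x₀` with `Σᵢ |aᵢ| ≤ Λ`, and `f` is
`C^{d+1}` on an open convex set `U ⊇ B̄(x₀, r)` with `‖D^{d+1}f‖ ≤ M` on `U`, then
`|f(x₀) − Σᵢ aᵢ f(xᵢ)| ≤ (1 + Λ) · M · r^{d+1} / (d+1)!`. -/
theorem MLS_order_of_accuracy
    (n N d : ℕ)
    (x₀ : EuclideanSpace ℝ (Fin n)) (r : ℝ) (hr : 0 < r)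
    (x : Fin N → EuclideanSpace ℝ (Fin n))
    (hx : ∀ i, x i ∈ Metric.closedBall x₀ r)
    (a : Fin N → ℝ)
    (hrepro : ∀ π : MvPolynomial (Fin n) ℝ, π.totalDegree ≤ d →
      ∑ i, a i * MvPolynomial.eval (x i) π = MvPolynomial.eval x₀ π)
    (Λ : ℝ) (hΛ : ∑ i, |a i| ≤ Λ)
    (U : Set (EuclideanSpace ℝ (Fin n))) (hU : IsOpen U) (hUconv : Convex ℝ U)
    (hUball : Metric.closedBall x₀ r ⊆ U)
    (f : EuclideanSpace ℝ (Fin n) → ℝ) (M : ℝ)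
    (hf : ContDiffOn ℝ (d + 1) f U)
    (hM : ∀ y ∈ U, ‖iteratedFDerivWithin ℝ (d + 1) f U y‖ ≤ M) :
    |f x₀ - ∑ i, a i * f (x i)| ≤
      (1 + Λ) * M * r ^ (d + 1) / (Nat.factorial (d + 1)) := by
  classical
  have hx₀U : x₀ ∈ U := hUball (Metric.mem_closedBall_self hr.le)
  have hM0 : 0 ≤ M := le_trans (norm_nonneg _) (hM x₀ hx₀U)
  have hΛ0 : 0 ≤ Λ := le_trans (Finset.sum_nonneg fun i _ => abs_nonneg _) hΛ
  set P : EuclideanSpace ℝ (Fin n) → ℝ := fun y =>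
    ∑ k ∈ Finset.range (d + 1),
      (k ! : ℝ)⁻¹ * iteratedFDerivWithin ℝ k f U x₀ (fun _ => y - x₀) with hP
  -- Taylor remainder bound along segments
  have key : ∀ y ∈ Metric.closedBall x₀ r,
      |f y - P y| ≤ M * ‖y - x₀‖ ^ (d + 1) / ((d + 1)! : ℝ) := by
    intro y hy
    set v : EuclideanSpace ℝ (Fin n) := y - x₀ with hv
    have hvr : ‖v‖ ≤ r := by
      rw [hv]; simpa [dist_eq_norm] using Metric.mem_closedBall.mp hy
    have hmem : ∀ t ∈ Icc (0:ℝ) 1, x₀ + t • v ∈ U := by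
      intro t ht
      apply hUball
      simp only [Metric.mem_closedBall, dist_eq_norm, add_sub_cancel_left]
      calc ‖t • v‖ = |t| * ‖v‖ := by rw [norm_smul, Real.norm_eq_abs]
        _ ≤ 1 * r :=
          mul_le_mul (abs_le.mpr ⟨by linarith [ht.1], ht.2⟩) hvr (norm_nonneg _) zero_le_one
        _ = r := one_mul r
    set G : ℕ → ℝ → ℝ :=
      fun k t => iteratedFDerivWithin ℝ k f U (x₀ + t • v) (fun _ => v) with hGdef
    have H := hf.ftaylorSeriesWithin hU.uniqueDiffOn
    have hγ : ∀ t : ℝ, HasDerivAt (fun s : ℝ => x₀ + s • v) v t := by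
      intro t
      simpa using ((hasDerivAt_id t).smul_const v).const_add x₀
    have hGd : ∀ k, k < d + 1 → ∀ t ∈ Icc (0:ℝ) 1, HasDerivAt (G k) (G (k+1) t) t := by
      intro k hk t ht
      have h1 : HasFDerivWithinAt (fun z => ftaylorSeriesWithin ℝ f U z k)
          ((ftaylorSeriesWithin ℝ f U (x₀ + t • v) (k+1)).curryLeft) U (x₀ + t • v) :=
        H.fderivWithin k (by exact_mod_cast hk) _ (hmem t ht)
      have h2 := (h1.hasFDerivAt (hU.mem_nhds (hmem t ht))).continuousMultilinear_apply_const
        (fun _ => v)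
      have h3 := h2.comp_hasDerivAt t (hγ t)
      convert h3 using 1
      show iteratedFDerivWithin ℝ (k+1) f U (x₀ + t • v) (fun _ => v)
        = iteratedFDerivWithin ℝ (k+1) f U (x₀ + t • v) (Fin.cons v (fun _ => v))
      congr 1; funext i; exact Fin.cases rfl (fun _ => rfl) i
      all_goals rfl
    set g : ℝ → ℝ := fun t => f (x₀ + t • v) with hgdef
    have hEq : ∀ k, k ≤ d + 1 → ∀ t ∈ Icc (0:ℝ) 1,
        iteratedDerivWithin k g (Icc 0 1) t = G k t := by
      intro k
      induction k with
      | zero =>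
        intro _ t ht
        simp [hGdef, hgdef]
      | succ k ih =>
        intro hk t ht
        have hk' : k ≤ d := Nat.succ_le_succ_iff.mp hk
        rw [iteratedDerivWithin_succ]
        have hcongr : derivWithin (iteratedDerivWithin k g (Icc 0 1)) (Icc 0 1) t
            = derivWithin (G k) (Icc 0 1) t :=
          derivWithin_congr (fun s hs => ih (le_trans (Nat.le_succ k) hk) s hs)
            (ih (le_trans (Nat.le_succ k) hk) t ht)
        rw [hcongr]
        exact ((hGd k (Nat.lt_succ_of_le hk') t ht).hasDerivWithinAt).derivWithin
          ((uniqueDiffOn_Icc one_pos) t ht)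
    have hγc : ContDiff ℝ (d : ℕ∞) fun t : ℝ => x₀ + t • v :=
      contDiff_const.add (contDiff_id.smul contDiff_const)
    have hgc : ContDiffOn ℝ (d : ℕ∞) g (Icc (0:ℝ) 1) :=
      (hf.of_le (by exact_mod_cast Nat.le_succ d)).comp hγc.contDiffOn
        (fun t ht => hmem t ht)
    have hdiff : DifferentiableOn ℝ (iteratedDerivWithin d g (Icc (0:ℝ) 1)) (Ioo (0:ℝ) 1) := by
      intro t ht
      have h1 : DifferentiableAt ℝ (G d) t :=
        (hGd d (Nat.lt_succ_self d) t (Ioo_subset_Icc_self ht)).differentiableAt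
      exact (h1.differentiableWithinAt).congr
        (fun s hs => hEq d (Nat.le_succ d) s (Ioo_subset_Icc_self hs))
        (hEq d (Nat.le_succ d) t (Ioo_subset_Icc_self ht))
    obtain ⟨t', ht', heq⟩ := taylor_mean_remainder_lagrange (f := g) (n := d) (x₀ := 0) (x := 1)
      zero_ne_one (by rw [Set.uIcc_of_le zero_le_one]; exact_mod_cast hgc)
      (by rw [Set.uIcc_of_le zero_le_one, Set.uIoo_of_le zero_le_one]; exact hdiff)
    rw [Set.uIcc_of_le zero_le_one] at heq
    rw [Set.uIoo_of_le zero_le_one] at ht'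
    have h1 : g 1 = f y := by
      rw [hgdef]; simp [hv]
    have h2 : taylorWithinEval g d (Icc 0 1) 0 1 = P y := by
      rw [taylor_within_apply, hP]
      refine Finset.sum_congr rfl fun k hk => ?_
      have hkd : k ≤ d + 1 := le_of_lt (Finset.mem_range.mp hk)
      rw [hEq k hkd 0 (by norm_num : (0:ℝ) ∈ Icc (0:ℝ) 1)]
      rw [hGdef]
      simp [smul_eq_mul, hv]
    have hbound : |G (d + 1) t'| ≤ M * ‖v‖ ^ (d + 1) := by
      have hle := (iteratedFDerivWithin ℝ (d+1) f U (x₀ + t' • v)).le_opNorm (fun _ => v)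
      calc |G (d + 1) t'| ≤ ‖iteratedFDerivWithin ℝ (d+1) f U (x₀ + t' • v)‖
            * ∏ _i : Fin (d+1), ‖v‖ := by
            rw [hGdef]; simpa [Real.norm_eq_abs] using hle
        _ = ‖iteratedFDerivWithin ℝ (d+1) f U (x₀ + t' • v)‖ * ‖v‖ ^ (d+1) := by
            simp [Finset.prod_const, Finset.card_univ]
        _ ≤ M * ‖v‖ ^ (d+1) := by
            have := hM (x₀ + t' • v) (hmem t' (Ioo_subset_Icc_self ht'))
            exact mul_le_mul_of_nonneg_right this (pow_nonneg (norm_nonneg _) _)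
    rw [← h1, ← h2, heq, hEq (d+1) le_rfl t' (Ioo_subset_Icc_self ht')]
    rw [abs_div, abs_mul]
    have hfac : |((d+1)! : ℝ)| = ((d+1)! : ℝ) := abs_of_pos (by positivity)
    rw [hfac]
    apply div_le_div_of_nonneg_right ?_ (by positivity) |>.trans_eq rfl
    · calc |G (d+1) t'| * |(1 - 0 : ℝ) ^ (d+1)| = |G (d+1) t'| := by norm_num
        _ ≤ M * ‖v‖ ^ (d+1) := hbound
  -- The Taylor polynomial is a genuine multivariate polynomial of degree ≤ d
  have hpoly : ∃ π : MvPolynomial (Fin n) ℝ, π.totalDegree ≤ d ∧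
      ∀ y : EuclideanSpace ℝ (Fin n), MvPolynomial.eval y π = P y := by
    refine ⟨∑ k ∈ Finset.range (d+1), ∑ m : Fin k → Fin n,
      MvPolynomial.C ((k ! : ℝ)⁻¹ *
        iteratedFDerivWithin ℝ k f U x₀ (fun j => EuclideanSpace.single (m j) 1)) *
        ∏ j, (MvPolynomial.X (m j) - MvPolynomial.C (x₀ (m j))), ?_, ?_⟩
    · refine (MvPolynomial.totalDegree_finset_sum _ _).trans (Finset.sup_le fun k hk => ?_)
      refine (MvPolynomial.totalDegree_finset_sum _ _).trans (Finset.sup_le fun m _ => ?_)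
      have hfactor : ∀ j : Fin k,
          (MvPolynomial.X (m j) - MvPolynomial.C (x₀ (m j)) : MvPolynomial (Fin n) ℝ).totalDegree
            ≤ 1 := by
        intro j
        rw [sub_eq_add_neg, ← map_neg]
        refine (MvPolynomial.totalDegree_add _ _).trans ?_
        simp [MvPolynomial.totalDegree_X, MvPolynomial.totalDegree_C]
      calc (MvPolynomial.C ((k ! : ℝ)⁻¹ *
            iteratedFDerivWithin ℝ k f U x₀ (fun j => EuclideanSpace.single (m j) 1)) *
            ∏ j, (MvPolynomial.X (m j) - MvPolynomial.C (x₀ (m j)))).totalDegree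
          ≤ (MvPolynomial.C ((k ! : ℝ)⁻¹ *
            iteratedFDerivWithin ℝ k f U x₀ (fun j => EuclideanSpace.single (m j) 1)) :
              MvPolynomial (Fin n) ℝ).totalDegree
            + (∏ j, (MvPolynomial.X (m j) - MvPolynomial.C (x₀ (m j)) :
              MvPolynomial (Fin n) ℝ)).totalDegree := MvPolynomial.totalDegree_mul _ _
        _ = (∏ j, (MvPolynomial.X (m j) - MvPolynomial.C (x₀ (m j)) :
              MvPolynomial (Fin n) ℝ)).totalDegree := by
            rw [MvPolynomial.totalDegree_C, zero_add]
        _ ≤ ∑ j : Fin k, (MvPolynomial.X (m j) - MvPolynomial.C (x₀ (m j)) :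
              MvPolynomial (Fin n) ℝ).totalDegree := MvPolynomial.totalDegree_finset_prod _ _
        _ ≤ ∑ _j : Fin k, 1 := Finset.sum_le_sum fun j _ => hfactor j
        _ = k := by simp
        _ ≤ d := Nat.lt_succ_iff.mp (Finset.mem_range.mp hk)
    · intro y
      rw [hP]
      simp only [map_sum, map_mul, MvPolynomial.eval_C, map_prod, map_sub, MvPolynomial.eval_X]
      refine Finset.sum_congr rfl fun k _ => ?_
      have hrepr : (y - x₀ : EuclideanSpace ℝ (Fin n))
          = ∑ l, (y - x₀) l • EuclideanSpace.single l (1:ℝ) := by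
        conv_lhs => rw [← (EuclideanSpace.basisFun (Fin n) ℝ).sum_repr (y - x₀)]
        simp [EuclideanSpace.basisFun_apply, EuclideanSpace.basisFun_repr]
      have hexp : (iteratedFDerivWithin ℝ k f U x₀) (fun _ : Fin k => y - x₀)
          = ∑ m : Fin k → Fin n, (∏ j, (y - x₀) (m j)) •
              iteratedFDerivWithin ℝ k f U x₀ (fun j => EuclideanSpace.single (m j) 1) := by
        conv_lhs => rw [show (fun _ : Fin k => (y - x₀ : EuclideanSpace ℝ (Fin n)))
          = fun _ : Fin k => ∑ l, (y - x₀) l • EuclideanSpace.single l (1:ℝ) from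
            funext fun _ => hrepr]
        rw [ContinuousMultilinearMap.map_sum]
        refine Finset.sum_congr rfl fun m _ => ?_
        exact ContinuousMultilinearMap.map_smul_univ _ _ _
      rw [hexp, Finset.mul_sum]
      refine Finset.sum_congr rfl fun m _ => ?_
      have hsub : ∀ j : Fin k, ((y - x₀ : EuclideanSpace ℝ (Fin n)) (m j)) = y (m j) - x₀ (m j) :=
        fun j => rfl
      simp only [smul_eq_mul, hsub]
      ring
  obtain ⟨π, hπd, hπeval⟩ := hpoly
  have hPx₀ : P x₀ = f x₀ := by
    have h := key x₀ (Metric.mem_closedBall_self hr.le)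
    rw [sub_self, norm_zero, zero_pow (Nat.succ_ne_zero d), mul_zero, zero_div] at h
    have := abs_nonpos_iff.mp h
    linarith [sub_eq_zero.mp this]
  have hsum : ∑ i, a i * P (x i) = f x₀ := by
    rw [← hPx₀]
    have h := hrepro π hπd
    simp only [hπeval] at h
    exact h
  have hnode : ∀ i, |P (x i) - f (x i)| ≤ M * r ^ (d + 1) / ((d+1)! : ℝ) := by
    intro i
    have h1 := key (x i) (hx i)
    rw [abs_sub_comm] at h1
    refine h1.trans ?_
    have h2 : M * ‖x i - x₀‖ ^ (d + 1) ≤ M * r ^ (d + 1) :=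
      mul_le_mul_of_nonneg_left
        (pow_le_pow_left₀ (norm_nonneg _) (mem_closedBall_iff_norm.mp (hx i)) _) hM0
    exact div_le_div_of_nonneg_right h2 (by positivity)
  have hB0 : 0 ≤ M * r ^ (d + 1) / ((d+1)! : ℝ) := by positivity
  have hrw : f x₀ - ∑ i, a i * f (x i) = ∑ i, a i * (P (x i) - f (x i)) := by
    rw [← hsum]
    rw [← Finset.sum_sub_distrib]
    refine Finset.sum_congr rfl fun i _ => ?_
    ring
  calc |f x₀ - ∑ i, a i * f (x i)| = |∑ i, a i * (P (x i) - f (x i))| := by rw [hrw]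
    _ ≤ ∑ i, |a i * (P (x i) - f (x i))| := Finset.abs_sum_le_sum_abs _ _
    _ = ∑ i, |a i| * |P (x i) - f (x i)| := by simp [abs_mul]
    _ ≤ ∑ i, |a i| * (M * r ^ (d + 1) / ((d+1)! : ℝ)) :=
        Finset.sum_le_sum fun i _ => mul_le_mul_of_nonneg_left (hnode i) (abs_nonneg _)
    _ = (∑ i, |a i|) * (M * r ^ (d + 1) / ((d+1)! : ℝ)) := by rw [← Finset.sum_mul]
    _ ≤ Λ * (M * r ^ (d + 1) / ((d+1)! : ℝ)) := mul_le_mul_of_nonneg_right hΛ hB0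
    _ ≤ (1 + Λ) * (M * r ^ (d + 1) / ((d+1)! : ℝ)) :=
        mul_le_mul_of_nonneg_right (by linarith) hB0
    _ = (1 + Λ) * M * r ^ (d + 1) / (Nat.factorial (d + 1)) := by ring
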